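/- If p_n^(1/n) > p_{n+1}^(1/(n+1)) for a given n ≥ 1, then n < ln(p_n) + ln(p_n)·p_n/g_n, where g_n = p_{n+1} - p_n. -/

import Mathlib

/-- `p n` is the `n`-th prime number (`p 1 = 2`, `p 2 = 3`, ...). -/
noncomputable def p (n : ℕ) : ℕ := Nat.nth Nat.Prime (n - 1)

/-- `g n = p (n+1) - p n` is the `n`-th prime gap. -/
noncomputable def g (n : ℕ) : ℕ := p (n + 1) - p n

theorem firoozbakht_imp_n_lt_gap (n : ℕ) (hn : 1 ≤ n)
    (h : (p (n + 1) : ℝ) ^ ((1 : ℝ) / (n + 1)) < (p n : ℝ) ^ ((1 : ℝ) / n)) :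
    (n : ℝ) < Real.log (p n) + Real.log (p n) * (p n : ℝ) / (g n : ℝ) := by
  have ha : (p n).Prime := Nat.prime_nth_prime _
  have hb : (p (n + 1)).Prime := Nat.prime_nth_prime _
  have hab : p n < p (n + 1) := by
    unfold p
    exact (Nat.nth_lt_nth Nat.infinite_setOf_prime).mpr (by omega)
  set a : ℝ := (p n : ℝ) with haa
  set b : ℝ := (p (n + 1) : ℝ) with hbb
  have ha2 : (2 : ℝ) ≤ a := by rw [haa]; exact_mod_cast ha.two_le
  have hb2 : (2 : ℝ) ≤ b := by rw [hbb]; exact_mod_cast hb.two_le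
  have habR : a < b := by rw [haa, hbb]; exact_mod_cast hab
  have hgR : (g n : ℝ) = b - a := by
    show ((p (n+1) - p n : ℕ) : ℝ) = b - a
    push_cast [Nat.cast_sub hab.le]
    rfl
  have hba : (0 : ℝ) < b - a := by linarith
  have hapos : (0 : ℝ) < a := by linarith
  have hbpos : (0 : ℝ) < b := by linarith
  have hloga : 0 < Real.log a := Real.log_pos (by linarith)
  have hnp : (0 : ℝ) < (n : ℝ) := by exact_mod_cast hn
  have hn1p : (0 : ℝ) < (n : ℝ) + 1 := by linarith
  -- take logs of the hypothesis
  have h1 : (1 / ((n : ℝ) + 1)) * Real.log b < (1 / (n : ℝ)) * Real.log a := by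
    have := Real.log_lt_log (Real.rpow_pos_of_pos hbpos _) h
    rwa [Real.log_rpow hbpos, Real.log_rpow hapos] at this
  have h2 : (n : ℝ) * Real.log b < ((n : ℝ) + 1) * Real.log a := by
    rw [div_mul_eq_mul_div, div_mul_eq_mul_div, div_lt_div_iff₀ hn1p hnp] at h1
    nlinarith [h1]
  have h4 : (n : ℝ) * (Real.log b - Real.log a) < Real.log a := by nlinarith
  -- logarithmic lower bound on the gap
  have hlog : (b - a) / b < Real.log b - Real.log a := by
    have h3 : Real.log (a / b) < a / b - 1 :=
      Real.log_lt_sub_one_of_pos (by positivity) (by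
        intro heq
        have : a = b := by field_simp at heq; linarith
        linarith)
    rw [Real.log_div (by linarith) (by linarith)] at h3
    have : (b - a) / b = -(a / b - 1) := by field_simp; ring
    rw [this]
    linarith
  have key : b - a < (Real.log b - Real.log a) * b := (div_lt_iff₀ hbpos).mp hlog
  have step1 : (n : ℝ) * (b - a) < (n : ℝ) * ((Real.log b - Real.log a) * b) :=
    mul_lt_mul_of_pos_left key hnp
  have step2 : ((n : ℝ) * (Real.log b - Real.log a)) * b < Real.log a * b :=
    mul_lt_mul_of_pos_right h4 hbpos
  have main : (n : ℝ) * (b - a) < Real.log a * b := by nlinarith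
  have final : (n : ℝ) < Real.log a * b / (b - a) := (lt_div_iff₀ hba).mpr main
  have heq : Real.log a * b / (b - a) = Real.log a + Real.log a * a / (b - a) := by
    field_simp
    ring
  rw [hgR]
  linarith [final, heq ▸ final]
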